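/- Every numerical semigroup of type t satisfies (t+1)·n_S ≥ F_S + 1, where n_S is the number of elements of S less than the Frobenius number F_S. In particular, every symmetric numerical semigroup satisfies the Wilf inequality. -/

import Mathlib

/-- `F` is the Frobenius number of `S`: `F ∉ S` and every larger integer lies in `S`. -/
def IsFrobenius (S : AddSubmonoid ℕ) (F : ℕ) : Prop :=
  F ∉ S ∧ ∀ m : ℕ, F < m → m ∈ S

/-- `n_S` : the number of elements of `S` less than the Frobenius number `F`. -/
noncomputable def nElt (S : AddSubmonoid ℕ) (F : ℕ) : ℕ := {s : ℕ | s ∈ S ∧ s < F}.ncard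

/-- The set of pseudo-Frobenius elements of `S`; its cardinality is the type of `S`. -/
def pseudoFrobenius (S : AddSubmonoid ℕ) : Set ℕ :=
  {x | x ∉ S ∧ ∀ s ∈ S, s ≠ 0 → x + s ∈ S}

open Classical in
/-- A numerical semigroup of type `t` satisfies `(t+1)·n_S ≥ F_S + 1`; in particular
symmetric semigroups (type `1`) satisfy the Wilf inequality. -/
theorem type_bound (S : AddSubmonoid ℕ) (F : ℕ) (hF : IsFrobenius S F) :
    ((pseudoFrobenius S).ncard + 1) * nElt S F ≥ F + 1 ∧
    ((pseudoFrobenius S).ncard = 1 → 2 * nElt S F ≥ F + 1) := by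
  obtain ⟨hFS, hgt⟩ := hF
  set Sf : Finset ℕ := (Finset.range (F+1)).filter (· ∈ S) with hSf
  set G : Finset ℕ := (Finset.range (F+1)).filter (· ∉ S) with hG
  set PFf : Finset ℕ := (Finset.range (F+1)).filter (· ∈ pseudoFrobenius S) with hPFf
  -- nElt = Sf.card
  have hn : nElt S F = Sf.card := by
    have hset : {s : ℕ | s ∈ S ∧ s < F} = ↑Sf := by
      ext s
      simp only [hSf, Finset.coe_filter, Finset.mem_range, Set.mem_setOf_eq,
        Finset.mem_coe]
      constructor
      · rintro ⟨h1, h2⟩; exact ⟨by omega, h1⟩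
      · rintro ⟨h1, h2⟩
        refine ⟨h2, ?_⟩
        rcases Nat.lt_or_ge s F with h | h
        · exact h
        · exfalso; have : s = F := by omega
          exact hFS (this ▸ h2)
    rw [nElt, hset, Set.ncard_coe_finset]
  -- ncard of pseudoFrobenius = PFf.card
  have hPFcard : (pseudoFrobenius S).ncard = PFf.card := by
    have hset : pseudoFrobenius S = ↑PFf := by
      ext x
      simp only [hPFf, Finset.coe_filter, Finset.mem_range, Set.mem_setOf_eq,
        Finset.mem_coe]
      constructor
      · intro hx
        refine ⟨?_, hx⟩
        by_contra h
        exact hx.1 (hgt x (by omega))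
      · exact fun h => h.2
    rw [hset, Set.ncard_coe_finset]
  -- Sf.card + G.card = F + 1
  have hsplit : Sf.card + G.card = F + 1 := by
    rw [hSf, hG, Finset.card_filter_add_card_filter_not, Finset.card_range]
  -- every gap x has a pseudo-Frobenius f with x ≤ f and f - x ∈ S
  have hcover : ∀ x ∈ G, ∃ f ∈ PFf, x ≤ f ∧ f - x ∈ S := by
    intro x hx
    simp only [hG, Finset.mem_filter, Finset.mem_range] at hx
    obtain ⟨hxF, hxS⟩ := hx
    set T : Finset ℕ := (Finset.range (F+1)).filter
      (fun y => y ∉ S ∧ x ≤ y ∧ y - x ∈ S) with hT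
    have hxT : x ∈ T := by
      simp only [hT, Finset.mem_filter, Finset.mem_range]
      exact ⟨hxF, hxS, le_refl x, by rw [Nat.sub_self]; exact S.zero_mem⟩
    have hne : T.Nonempty := ⟨x, hxT⟩
    set f := T.max' hne with hf
    have hfT : f ∈ T := T.max'_mem hne
    simp only [hT, Finset.mem_filter, Finset.mem_range] at hfT
    obtain ⟨hfF, hfS, hxf, hfxS⟩ := hfT
    have hfPF : f ∈ pseudoFrobenius S := by
      refine ⟨hfS, fun s hs hs0 => ?_⟩
      by_contra hfs
      have hfsF : f + s < F + 1 := by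
        by_contra h
        exact hfs (hgt (f + s) (by omega))
      have hmem : f + s ∈ T := by
        simp only [hT, Finset.mem_filter, Finset.mem_range]
        refine ⟨hfsF, hfs, by omega, ?_⟩
        have : f + s - x = (f - x) + s := by omega
        rw [this]
        exact S.add_mem hfxS hs
      have := T.le_max' _ hmem
      omega
    exact ⟨f, by simp [hPFf, Finset.mem_filter, Finset.mem_range, hfF, hfPF], hxf, hfxS⟩
  -- G covered by the union over PFf
  have hsub : G ⊆ PFf.biUnion (fun f => G.filter (fun x => x ≤ f ∧ f - x ∈ S)) := by
    intro x hx
    obtain ⟨f, hfPF, h1, h2⟩ := hcover x hx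
    exact Finset.mem_biUnion.2 ⟨f, hfPF, Finset.mem_filter.2 ⟨hx, h1, h2⟩⟩
  -- per-f bound
  have hperf : ∀ f ∈ PFf, (G.filter (fun x => x ≤ f ∧ f - x ∈ S)).card ≤ Sf.card := by
    intro f hfPF
    simp only [hPFf, Finset.mem_filter, Finset.mem_range] at hfPF
    apply Finset.card_le_card_of_injOn (fun x => f - x)
    · intro x hx
      simp only [Finset.mem_coe, Finset.mem_filter, Finset.mem_range, hG] at hx ⊢
      simp only [hSf, Finset.mem_coe, Finset.mem_filter, Finset.mem_range]
      exact ⟨by omega, hx.2.2⟩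
    · intro a ha b hb hab
      have h1 := (Finset.mem_filter.1 ha).2.1
      have h2 := (Finset.mem_filter.1 hb).2.1
      have h3 : f - a = f - b := hab
      omega
  -- combine
  have hGle : G.card ≤ PFf.card * Sf.card := by
    calc G.card ≤ (PFf.biUnion (fun f => G.filter (fun x => x ≤ f ∧ f - x ∈ S))).card :=
          Finset.card_le_card hsub
      _ ≤ ∑ f ∈ PFf, (G.filter (fun x => x ≤ f ∧ f - x ∈ S)).card :=
          Finset.card_biUnion_le
      _ ≤ ∑ _f ∈ PFf, Sf.card := Finset.sum_le_sum hperf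
      _ = PFf.card * Sf.card := by rw [Finset.sum_const, smul_eq_mul]
  have hmain : (PFf.card + 1) * Sf.card ≥ F + 1 := by
    have : (PFf.card + 1) * Sf.card = PFf.card * Sf.card + Sf.card := by ring
    omega
  rw [hPFcard, hn]
  exact ⟨hmain, fun h1 => by rw [h1] at hmain; linarith⟩
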